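/- Let X be a complex Banach space and T a bounded linear operator. Suppose K(T) is closed and there exists a closed T-invariant subspace N with N ⊆ H₀(T) and X = K(T) ⊕ N. Then the restriction of T to K(T) is surjective and the restriction of T to N is quasinilpotent. -/

import Mathlib

open Filter Topology

noncomputable def clmRestrict {X : Type*} [NormedAddCommGroup X] [NormedSpace ℂ X]
    (T : X →L[ℂ] X) (M : Submodule ℂ X) (h : ∀ x ∈ M, T x ∈ M) : M →L[ℂ] M :=
  { toLinearMap := (T : X →ₗ[ℂ] X).restrict h
    cont := by
      apply Continuous.subtype_mk
      exact T.continuous.comp continuous_subtype_val }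
/-- The quasinilpotent part of an operator. -/
def H0 {X : Type*} [NormedAddCommGroup X] [NormedSpace ℂ X] (T : X →L[ℂ] X) : Set X :=
  {x : X | Tendsto (fun n : ℕ => ‖(T ^ n) x‖ ^ (1 / (n : ℝ))) atTop (nhds 0)}

/-- The analytical core of an operator. -/
def Kcore {X : Type*} [NormedAddCommGroup X] [NormedSpace ℂ X] (T : X →L[ℂ] X) : Set X :=
  {x : X | ∃ c > (0 : ℝ), ∃ u : ℕ → X, u 0 = x ∧ (∀ n : ℕ, T (u (n + 1)) = u n) ∧
    ∀ n : ℕ, ‖u n‖ ≤ c ^ n * ‖x‖}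

lemma quasinil_of_pointwise {E : Type*} [NormedAddCommGroup E] [NormedSpace ℂ E]
    [CompleteSpace E] (S : E →L[ℂ] E)
    (h : ∀ x : E, Tendsto (fun n : ℕ => ‖(S ^ n) x‖ ^ (1 / (n : ℝ))) atTop (𝓝 0)) :
    spectralRadius ℂ S = 0 := by
  have hspec : spectrum ℂ S ⊆ {0} := by
    intro l hl
    by_contra hl0
    have hl0 : l ≠ 0 := hl0
    have hln : (0:ℝ) < ‖l‖ := norm_pos_iff.2 hl0
    have hlpos : (0 : ℝ) < ‖l‖ / 2 := by linarith
    -- summability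
    have hS : ∀ y : E, Summable (fun n : ℕ => (l⁻¹) ^ (n + 1) • (S ^ n) y) := by
      intro y
      apply Summable.of_norm_bounded_eventually_nat (g := fun n => ‖l‖⁻¹ * (1 / 2) ^ n)
      · exact (summable_geometric_of_lt_one (by norm_num) (by norm_num)).mul_left _
      · filter_upwards [(h y).eventually_lt_const hlpos, eventually_ge_atTop 1] with n hn hn1
        have hSn : ‖(S ^ n) y‖ ≤ (‖l‖ / 2) ^ n := by
          have h2 := pow_le_pow_left₀ (Real.rpow_nonneg (norm_nonneg _) _) hn.le n
          rwa [one_div, Real.rpow_inv_natCast_pow (norm_nonneg _) (by omega)] at h2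
        rw [norm_smul, norm_pow, norm_inv]
        calc ‖l‖⁻¹ ^ (n + 1) * ‖(S ^ n) y‖ ≤ ‖l‖⁻¹ ^ (n + 1) * (‖l‖ / 2) ^ n := by gcongr
          _ = ‖l‖⁻¹ * (1 / 2) ^ n := by
              rw [pow_succ', mul_assoc, ← mul_pow, ← mul_div_assoc,
                inv_mul_cancel₀ hln.ne']
    set f : E → E := fun y => ∑' n : ℕ, (l⁻¹) ^ (n + 1) • (S ^ n) y with hf
    set g : ℕ → E →L[ℂ] E := fun m => ∑ n ∈ Finset.range m, (l⁻¹) ^ (n + 1) • (S ^ n) with hg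
    have hgx : ∀ (m : ℕ) (y : E), g m y = ∑ n ∈ Finset.range m, (l⁻¹) ^ (n + 1) • (S ^ n) y := by
      intro m y; simp [hg]
    have htend : Tendsto (fun m y => g m y) atTop (𝓝 f) := by
      rw [tendsto_pi_nhds]
      intro y
      simpa only [hgx] using (hS y).hasSum.tendsto_sum_nat
    set R : E →L[ℂ] E := continuousLinearMapOfTendsto g htend with hR
    have hRapp : ∀ y, R y = f y := fun y => rfl
    have hSf : ∀ y, S (f y) = ∑' n : ℕ, (l⁻¹) ^ (n + 1) • (S ^ (n + 1)) y := by
      intro y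
      rw [hf]
      simp only
      rw [ContinuousLinearMap.map_tsum S (hS y)]
      congr 1; ext n
      rw [ContinuousLinearMap.map_smul]
      congr 1
      rw [pow_succ']; rfl
    -- S commutes with R
    have hcomm : ∀ y, S (R y) = R (S y) := by
      intro y
      rw [hRapp, hRapp, hSf, hf]
      simp only
      refine tsum_congr fun n => ?_
      congr 1
    -- key identity
    have hkey : ∀ y, l • R y - S (R y) = y := by
      intro y
      rw [hRapp, hSf]
      have hsum' : Summable (fun n : ℕ => (l⁻¹) ^ n • (S ^ n) y) := by
        have h3 := (hS y).const_smul l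
        have : (fun n : ℕ => l • ((l⁻¹) ^ (n + 1) • (S ^ n) y))
            = fun n : ℕ => (l⁻¹) ^ n • (S ^ n) y := by
          ext n
          rw [smul_smul, pow_succ', ← mul_assoc, mul_inv_cancel₀ hl0, one_mul]
        rwa [this] at h3
      have h1 : l • f y = ∑' n : ℕ, (l⁻¹) ^ n • (S ^ n) y := by
        rw [hf]
        simp only
        rw [← tsum_const_smul'' l]
        congr 1; ext n
        rw [smul_smul, pow_succ', ← mul_assoc, mul_inv_cancel₀ hl0, one_mul]
      rw [h1, Summable.tsum_eq_zero_add hsum']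
      simp
    -- R is a two-sided inverse of algebraMap ℂ _ l - S
    have hunit : IsUnit (algebraMap ℂ (E →L[ℂ] E) l - S) := by
      refine ⟨⟨algebraMap ℂ (E →L[ℂ] E) l - S, R, ?_, ?_⟩, rfl⟩
      · ext y
        simpa [ContinuousLinearMap.smul_apply, Algebra.algebraMap_eq_smul_one] using hkey y
      · ext y
        have := hkey (y := y)
        rw [hcomm] at this
        have h4 : R (l • y - S y) = l • R y - R (S y) := by
          rw [map_sub, map_smul]
        simpa [Algebra.algebraMap_eq_smul_one, h4] using this
    exact (spectrum.mem_iff.mp hl) hunit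
  refine le_antisymm ?_ zero_le
  rw [spectralRadius]
  refine iSup₂_le fun k hk => ?_
  have : k = 0 := hspec hk
  simp [this]

lemma clmRestrict_pow_coe {X : Type*} [NormedAddCommGroup X] [NormedSpace ℂ X]
    (T : X →L[ℂ] X) (M : Submodule ℂ X) (h : ∀ x ∈ M, T x ∈ M) (n : ℕ) (x : M) :
    (((clmRestrict T M h) ^ n) x : X) = (T ^ n) (x : X) := by
  induction n generalizing x with
  | zero => simp
  | succ n ih =>
      rw [pow_succ, pow_succ, ContinuousLinearMap.mul_apply, ContinuousLinearMap.mul_apply,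
        ih ((clmRestrict T M h) x)]
      rfl

/-- If K(T) is closed and complemented by a closed T-invariant N ⊆ H₀(T), then
the restriction of T to K(T) is surjective and the restriction to N is
quasinilpotent. -/
theorem stmt_13 {X : Type*} [NormedAddCommGroup X] [NormedSpace ℂ X] [CompleteSpace X]
    (T : X →L[ℂ] X) (K₀ N : Submodule ℂ X)
    (hK0 : (K₀ : Set X) = Kcore T) (hK0c : IsClosed (K₀ : Set X))
    (hNc : IsClosed (N : Set X)) (hNH0 : (N : Set X) ⊆ H0 T)
    (hK : ∀ x ∈ K₀, T x ∈ K₀) (hN : ∀ x ∈ N, T x ∈ N)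
    (hcompl : IsCompl K₀ N) :
    Function.Surjective (clmRestrict T K₀ hK) ∧
      spectralRadius ℂ (clmRestrict T N hN) = 0 := by
  constructor
  · -- surjectivity on the analytical core
    rintro ⟨y, hy⟩
    have hyK : y ∈ Kcore T := by rw [← hK0]; exact hy
    obtain ⟨c, hc, u, hu0, huT, hub⟩ := hyK
    by_cases hu1 : u 1 = 0
    · -- then y = T (u 1) = 0
      have hy0 : y = 0 := by rw [← hu0, ← huT 0, hu1, map_zero]
      refine ⟨0, ?_⟩
      apply Subtype.ext
      show T ((0 : K₀) : X) = y
      simp [hy0]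
    · -- u 1 is a preimage; show it lies in Kcore T
      have hu1n : (0:ℝ) < ‖u 1‖ := norm_pos_iff.2 hu1
      set c' : ℝ := c * max 1 (c * ‖y‖ / ‖u 1‖) with hc'
      have hc'pos : 0 < c' := by
        apply mul_pos hc
        exact lt_of_lt_of_le one_pos (le_max_left _ _)
      have hmem : u 1 ∈ Kcore T := by
        refine ⟨c', hc'pos, fun n => u (n + 1), rfl, fun n => huT (n + 1), fun n => ?_⟩
        rcases Nat.eq_zero_or_pos n with hn | hn
        · subst hn; simpa using le_refl ‖u 1‖
        · have h1 : ‖u (n + 1)‖ ≤ c ^ (n + 1) * ‖y‖ := by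
            simpa [hu0] using hub (n + 1)
          have h2 : c ^ (n + 1) * ‖y‖ ≤ c' ^ n * ‖u 1‖ := by
            have hmax1 : (1:ℝ) ≤ max 1 (c * ‖y‖ / ‖u 1‖) := le_max_left _ _
            have h3 : c * ‖y‖ / ‖u 1‖ ≤ (max 1 (c * ‖y‖ / ‖u 1‖)) ^ n :=
              le_trans (le_max_right _ _) (le_self_pow₀ hmax1 (by omega))
            have h5 : c * ‖y‖ ≤ (max 1 (c * ‖y‖ / ‖u 1‖)) ^ n * ‖u 1‖ :=
              (div_le_iff₀ hu1n).mp h3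
            calc c ^ (n+1) * ‖y‖ = c ^ n * (c * ‖y‖) := by ring
              _ ≤ c ^ n * ((max 1 (c * ‖y‖ / ‖u 1‖)) ^ n * ‖u 1‖) :=
                  mul_le_mul_of_nonneg_left h5 (pow_nonneg hc.le n)
              _ = c' ^ n * ‖u 1‖ := by rw [hc', mul_pow]; ring
          exact h1.trans h2
      have hmemK : u 1 ∈ K₀ := by rw [← hK0] at hmem; exact hmem
      refine ⟨⟨u 1, hmemK⟩, ?_⟩
      apply Subtype.ext
      show T (u 1) = y
      rw [huT 0, hu0]
  · -- quasinilpotence on N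
    haveI : CompleteSpace N := hNc.completeSpace_coe
    apply quasinil_of_pointwise
    intro x
    have hx : Tendsto (fun n : ℕ => ‖(T ^ n) (x : X)‖ ^ (1 / (n : ℝ))) atTop (𝓝 0) := hNH0 x.2
    have hnorm : ∀ n : ℕ, ‖((clmRestrict T N hN) ^ n) x‖ = ‖(T ^ n) (x : X)‖ := by
      intro n
      rw [← clmRestrict_pow_coe T N hN n x]
      rfl
    simpa only [hnorm] using hx
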